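/- α-sector-boundedness of the static current mapping (Appendix C, conclusion): Let G₀ > 0 and Λ ≥ 0 with Λ·G₀ < 1, let ψ : ℝ → ℝ be differentiable with ψ(0) = 0 and |ψ′| ≤ Λ, let 𝒯̃ be the inverse of x ↦ x + ψ(G₀ x), and for fixed I_c, I_p ∈ ℝ define the static current mapping 𝒯(i_c) = I_p + 𝒯̃(i_c − I_c). Then 𝒯 is α-sector-bounded to [K_lb, K_ub] with α = I_p − K·I_c interpreted pointwise as follows: for every i_c ∈ ℝ, (𝒯(i_c) − K_lb (i_c − I_c) − I_p) · (𝒯(i_c) − K_ub (i_c − I_c) − I_p) ≤ 0, where K_lb = 1/(1 + ΛG₀) and K_ub = 1/(1 − ΛG₀). -/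

import Mathlib

/-- α-sector-boundedness of the static current mapping (Appendix C, conclusion):
`𝒯 i_c = I_p + 𝒯̃ (i_c - I_c)` is α-sector-bounded to
`[1/(1 + ΛG₀), 1/(1 - ΛG₀)]` about the equilibrium `(I_c, I_p)`. -/
theorem static_current_mapping_alpha_sector_bounded
    (G₀ Λ : ℝ) (hG₀ : 0 < G₀) (hΛ : 0 ≤ Λ) (hΛG : Λ * G₀ < 1)
    (ψ : ℝ → ℝ) (hψ : Differentiable ℝ ψ) (hψ0 : ψ 0 = 0)
    (hψ' : ∀ x, |deriv ψ x| ≤ Λ)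
    (Ttilde : ℝ → ℝ)
    (hTleft : Function.LeftInverse Ttilde fun x => x + ψ (G₀ * x))
    (hTright : Function.RightInverse Ttilde fun x => x + ψ (G₀ * x))
    (I_c I_p : ℝ)
    (T : ℝ → ℝ) (hT : ∀ i_c, T i_c = I_p + Ttilde (i_c - I_c)) :
    ∀ i_c : ℝ,
      (T i_c - (1 / (1 + Λ * G₀)) * (i_c - I_c) - I_p) *
        (T i_c - (1 / (1 - Λ * G₀)) * (i_c - I_c) - I_p) ≤ 0 := by
  intro i_c
  -- ψ is Λ-Lipschitz
  have hlip : LipschitzWith Λ.toNNReal ψ := by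
    apply lipschitzWith_of_nnnorm_deriv_le hψ
    intro x
    rw [← NNReal.coe_le_coe]
    simpa [Real.norm_eq_abs, Real.coe_toNNReal Λ hΛ] using hψ' x
  set u := i_c - I_c with hu
  set y := Ttilde u with hy
  have hur : y + ψ (G₀ * y) = u := hTright u
  have hbound : |ψ (G₀ * y)| ≤ Λ * G₀ * |y| := by
    have := hlip.dist_le_mul (G₀ * y) 0
    rw [Real.dist_eq, Real.dist_eq, hψ0, sub_zero, sub_zero,
      Real.coe_toNNReal Λ hΛ] at this
    calc |ψ (G₀ * y)| ≤ Λ * |G₀ * y| := this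
      _ = Λ * G₀ * |y| := by rw [abs_mul, abs_of_pos hG₀]; ring
  have ha : (0:ℝ) < 1 + Λ * G₀ := by nlinarith
  have hb : (0:ℝ) < 1 - Λ * G₀ := by linarith
  have hsq : (ψ (G₀ * y))^2 ≤ (Λ * G₀ * y)^2 := by
    have h2 : |Λ * G₀ * y| = Λ * G₀ * |y| := by
      rw [abs_mul, abs_of_nonneg (by positivity : (0:ℝ) ≤ Λ * G₀)]
    nlinarith [abs_nonneg (ψ (G₀ * y)), sq_abs (ψ (G₀ * y)), sq_abs (Λ * G₀ * y),
      abs_nonneg (Λ * G₀ * y), hbound]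
  have hT' : T i_c = I_p + y := by rw [hT i_c]
  rw [hT']
  have h1 : I_p + y - 1 / (1 + Λ * G₀) * u - I_p
      = (Λ * G₀ * y - ψ (G₀ * y)) / (1 + Λ * G₀) := by
    field_simp
    nlinarith [hur, show ψ (y * G₀) = ψ (G₀ * y) by rw [mul_comm]]
  have h2 : I_p + y - 1 / (1 - Λ * G₀) * u - I_p
      = (-(Λ * G₀ * y) - ψ (G₀ * y)) / (1 - Λ * G₀) := by
    field_simp
    nlinarith [hur, show ψ (y * G₀) = ψ (G₀ * y) by rw [mul_comm]]
  rw [h1, h2, div_mul_div_comm]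
  apply div_nonpos_of_nonpos_of_nonneg
  · nlinarith
  · positivity
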